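/- For α even, α ≥ 2, with B''_{α−2} = ∫₀^∞ t^(n−1−(α−2)+2γ) (ψ'(t))² dt, it holds that B_{α−2} = (n−2γ−α) B''_{α−2} / (n+2γ−α+2), where ψ(t) = d₂ t^(−γ) K_γ(t) solves ψ'' + ((1+2γ)/t) ψ' − ψ = 0 with appropriate decay. -/

import Mathlib

open MeasureTheory Set Filter

lemma aux_small_zero {g : ℝ → ℝ} (hg : IntegrableOn g (Ioi 0))
    {ε δ : ℝ} (hε : 0 < ε) (hδ : 0 < δ) :
    ∃ t, 0 < t ∧ t < δ ∧ t * g t < ε := by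
  by_contra h
  push_neg at h
  have hle : ∀ t ∈ Ioo (0:ℝ) δ, ε / t ≤ g t := by
    intro t ht
    rw [div_le_iff₀ ht.1]
    have := h t ht.1 ht.2
    linarith [this]
  have hmeas : AEStronglyMeasurable (fun t : ℝ => ε * t ^ (-1:ℝ))
      (volume.restrict (Ioo (0:ℝ) δ)) := by
    apply Measurable.aestronglyMeasurable
    exact (measurable_id.pow_const _).const_mul _
  have hint : IntegrableOn (fun t : ℝ => ε * t ^ (-1:ℝ)) (Ioo 0 δ) := by
    refine Integrable.mono' (hg.mono_set Ioo_subset_Ioi_self) hmeas ?_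
    rw [ae_restrict_iff' measurableSet_Ioo]
    filter_upwards with t
    intro ht
    have h1 : ε * t ^ (-1:ℝ) = ε / t := by
      rw [Real.rpow_neg_one]; ring
    rw [h1, Real.norm_eq_abs, abs_of_pos (div_pos hε ht.1)]
    exact hle t ht
  have : IntegrableOn (fun t : ℝ => t ^ (-1:ℝ)) (Ioo (0:ℝ) δ) := by
    have := hint.const_mul ε⁻¹
    simp [← mul_assoc, inv_mul_cancel₀ hε.ne'] at this; exact this
  rw [intervalIntegral.integrableOn_Ioo_rpow_iff hδ] at this
  linarith

lemma aux_small_inf {g : ℝ → ℝ} (hg : IntegrableOn g (Ioi 0))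
    {ε M : ℝ} (hε : 0 < ε) (hM : 0 < M) :
    ∃ t, M < t ∧ t * g t < ε := by
  by_contra h
  push_neg at h
  have hle : ∀ t ∈ Ioi M, ε / t ≤ g t := by
    intro t ht
    have htpos : (0:ℝ) < t := hM.trans ht
    rw [div_le_iff₀ htpos]
    linarith [h t ht]
  have hmeas : AEStronglyMeasurable (fun t : ℝ => ε * t ^ (-1:ℝ))
      (volume.restrict (Ioi M)) := by
    apply Measurable.aestronglyMeasurable
    exact (measurable_id.pow_const _).const_mul _
  have hint : IntegrableOn (fun t : ℝ => ε * t ^ (-1:ℝ)) (Ioi M) := by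
    refine Integrable.mono' (hg.mono_set (Ioi_subset_Ioi hM.le)) hmeas ?_
    rw [ae_restrict_iff' measurableSet_Ioi]
    filter_upwards with t
    intro ht
    have htpos : (0:ℝ) < t := hM.trans ht
    have h1 : ε * t ^ (-1:ℝ) = ε / t := by
      rw [Real.rpow_neg_one]; ring
    rw [h1, Real.norm_eq_abs, abs_of_pos (div_pos hε htpos)]
    exact hle t ht
  have : IntegrableOn (fun t : ℝ => t ^ (-1:ℝ)) (Ioi M) := by
    have := hint.const_mul ε⁻¹
    simp [← mul_assoc, inv_mul_cancel₀ hε.ne'] at this; exact this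
  rw [integrableOn_Ioi_rpow_iff hM] at this
  linarith

theorem stmt_5 (n : ℕ) (γ : ℝ) (hγ : γ ∈ Set.Ioo (0:ℝ) 1) (hn : 2*γ < (n:ℝ))
    (ψ : ℝ → ℝ)
    (hsmooth : ContDiffOn ℝ 2 ψ (Set.Ioi 0))
    (hode : ∀ t ∈ Set.Ioi (0:ℝ),
      deriv (deriv ψ) t + ((1 + 2*γ)/t) * deriv ψ t - ψ t = 0)
    (h0 : ∃ C : ℝ, ∀ t ∈ Set.Ioo (0:ℝ) 1, |t ^ (2*γ) * ψ t| ≤ C)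
    (hinf : ∃ C : ℝ, ∀ t ∈ Set.Ici (1:ℝ), |t ^ (γ + 1/2) * Real.exp t * ψ t| ≤ C)
    (α : ℕ) (heven : Even α) (hα : 2 ≤ α)
    (hI1 : MeasureTheory.IntegrableOn
      (fun t => t ^ (-((α:ℝ) - 2) + 2*γ) * (ψ t)^2 * t ^ ((n:ℝ) - 1)) (Set.Ioi 0))
    (hI2 : MeasureTheory.IntegrableOn
      (fun t => t ^ (-((α:ℝ) - 2) + 2*γ) * (deriv ψ t)^2 * t ^ ((n:ℝ) - 1)) (Set.Ioi 0)) :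
    ∫ t in Set.Ioi (0:ℝ), t ^ (-((α:ℝ) - 2) + 2*γ) * (ψ t)^2 * t ^ ((n:ℝ) - 1)
      = ((n:ℝ) - 2*γ - α) *
          (∫ t in Set.Ioi (0:ℝ),
            t ^ (-((α:ℝ) - 2) + 2*γ) * (deriv ψ t)^2 * t ^ ((n:ℝ) - 1)) /
          ((n:ℝ) + 2*γ - α + 2) := by
  obtain ⟨hγ0, hγ1⟩ := hγ
  set c1 : ℝ := -((α:ℝ) - 2) + 2*γ with hc1
  set c2 : ℝ := (n:ℝ) - 1 with hc2
  set e : ℝ := c1 + c2 with he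
  set cB : ℝ := (n:ℝ) - 2*γ - α with hcB
  set cA : ℝ := (n:ℝ) + 2*γ - α + 2 with hcA
  set f1 : ℝ → ℝ := fun t => t ^ c1 * (ψ t)^2 * t ^ c2 with hf1
  set f2 : ℝ → ℝ := fun t => t ^ c1 * (deriv ψ t)^2 * t ^ c2 with hf2
  set A : ℝ := ∫ t in Set.Ioi (0:ℝ), f1 t with hA
  set B : ℝ := ∫ t in Set.Ioi (0:ℝ), f2 t with hB
  -- basic rpow facts
  have hpow : ∀ t : ℝ, 0 < t → t ^ c1 * t ^ c2 = t ^ e := fun t ht =>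
    (Real.rpow_add ht c1 c2).symm
  have hepone : cA = e + 1 := by push_cast [he, hc1, hc2, hcA]; ring
  -- differentiability
  have hd1 : ∀ t ∈ Set.Ioi (0:ℝ), HasDerivAt ψ (deriv ψ t) t := by
    intro t ht
    exact (((hsmooth.differentiableOn (by norm_num)).differentiableAt
      (isOpen_Ioi.mem_nhds ht))).hasDerivAt
  have hC1 : ContDiffOn ℝ 1 (deriv ψ) (Set.Ioi 0) := by
    refine hsmooth.deriv_of_isOpen isOpen_Ioi (by norm_num)
  have hd2 : ∀ t ∈ Set.Ioi (0:ℝ), HasDerivAt (deriv ψ) (deriv (deriv ψ) t) t := by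
    intro t ht
    exact ((hC1.differentiableOn (by norm_num)).differentiableAt
      (isOpen_Ioi.mem_nhds ht)).hasDerivAt
  -- the potential F and its derivative H
  set F : ℝ → ℝ := fun t => t ^ (e+1) * ((deriv ψ t)^2 - (ψ t)^2) with hF
  set H : ℝ → ℝ := fun t => cB * f2 t - cA * f1 t with hH
  have hcBe : cB = e + 1 - (4*γ+2) := by rw [hcB, he, hc1, hc2]; push_cast; ring
  have hFderiv : ∀ t ∈ Set.Ioi (0:ℝ), HasDerivAt F (H t) t := by
    intro t ht
    have ht0 : (0:ℝ) < t := ht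
    have hu : HasDerivAt (fun x : ℝ => x ^ (e+1)) ((e+1) * t ^ e) t := by
      have h := Real.hasDerivAt_rpow_const (x := t) (p := e+1) (Or.inl ht0.ne')
      simpa [show e + 1 - 1 = e by ring] using h
    have hv : HasDerivAt (fun x => (deriv ψ x)^2 - (ψ x)^2)
        (2 * deriv ψ t * deriv (deriv ψ) t - 2 * ψ t * deriv ψ t) t := by
      have h := ((hd2 t ht).pow 2).sub ((hd1 t ht).pow 2)
      norm_num at h
      exact h
    have hdd : deriv (deriv ψ) t = ψ t - ((1 + 2*γ)/t) * deriv ψ t := by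
      have h := hode t ht
      linarith
    have htpow : t ^ (e+1) = t ^ e * t := by
      rw [Real.rpow_add ht0, Real.rpow_one]
    have goal_eq : H t = (e+1) * t ^ e * ((deriv ψ t)^2 - (ψ t)^2)
        + t ^ (e+1) * (2 * deriv ψ t * deriv (deriv ψ) t - 2 * ψ t * deriv ψ t) := by
      simp only [hH, hf1, hf2]
      rw [hdd, htpow, ← hpow t ht0, hcBe, hepone]
      field_simp
      ring
    rw [hF, goal_eq]
    exact hu.mul hv
  have Hint : IntegrableOn H (Set.Ioi 0) := (hI2.const_mul cB).sub (hI1.const_mul cA)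
  -- g and bound on F
  set g : ℝ → ℝ := fun t => f1 t + f2 t with hg
  have gint : IntegrableOn g (Set.Ioi 0) := hI1.add hI2
  have gnonneg : ∀ t ∈ Set.Ioi (0:ℝ), 0 ≤ g t := by
    intro t ht
    have h1 : (0:ℝ) ≤ t ^ c1 := Real.rpow_nonneg (le_of_lt ht) c1
    have h2 : (0:ℝ) ≤ t ^ c2 := Real.rpow_nonneg (le_of_lt ht) c2
    simp only [hg, hf1, hf2]
    positivity
  have hFbound : ∀ t ∈ Set.Ioi (0:ℝ), |F t| ≤ t * g t := by
    intro t ht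
    have ht0 : (0:ℝ) < t := ht
    have htpow : t ^ (e+1) = t ^ e * t := by
      rw [Real.rpow_add ht0, Real.rpow_one]
    have hgt : t * g t = t ^ e * t * ((ψ t)^2 + (deriv ψ t)^2) := by
      simp only [hg, hf1, hf2]
      rw [← hpow t ht0]
      ring
    have hnn : (0:ℝ) ≤ t ^ e * t := mul_nonneg (Real.rpow_nonneg ht0.le _) ht0.le
    have h1 : |(deriv ψ t)^2 - (ψ t)^2| ≤ (ψ t)^2 + (deriv ψ t)^2 := by
      rw [abs_le]
      constructor <;> nlinarith [sq_nonneg (ψ t), sq_nonneg (deriv ψ t)]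
    simp only [hF]
    rw [htpow, hgt, abs_mul, abs_of_nonneg hnn]
    exact mul_le_mul_of_nonneg_left h1 hnn
  -- sequences
  have hT : ∀ k : ℕ, ∃ t : ℝ, 0 < t ∧ t < 1/(k+1) ∧ t * g t < 1/(k+1) := by
    intro k
    exact aux_small_zero gint (by positivity) (by positivity)
  have hU : ∀ k : ℕ, ∃ t : ℝ, (k:ℝ)+1 < t ∧ t * g t < 1/(k+1) := by
    intro k
    exact aux_small_inf gint (by positivity) (by positivity)
  choose T hT1 hT2 hT3 using hT
  choose U hU1 hU2 using hU
  have hTU : ∀ k : ℕ, T k ≤ U k := by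
    intro k
    have h1 : T k < 1 := lt_of_lt_of_le (hT2 k) (by
      rw [div_le_one (by positivity)]; linarith [Nat.cast_nonneg (α := ℝ) k])
    nlinarith [hU1 k, Nat.cast_nonneg (α := ℝ) k]
  have hUpos : ∀ k : ℕ, 0 < U k := fun k => lt_of_lt_of_le (hT1 k) (hTU k)
  have honek : Tendsto (fun k : ℕ => 1/((k:ℝ)+1)) atTop (nhds 0) :=
    tendsto_one_div_add_atTop_nhds_zero_nat
  -- limits of boundary terms
  have hFT : Tendsto (fun k => F (T k)) atTop (nhds 0) := by
    apply squeeze_zero_norm (fun k => ?_) (squeeze_zero (fun k => ?_) (fun k => (hT3 k).le) honek)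
    · exact hFbound (T k) (hT1 k)
    · exact mul_nonneg (hT1 k).le (gnonneg _ (hT1 k))
  have hFU : Tendsto (fun k => F (U k)) atTop (nhds 0) := by
    apply squeeze_zero_norm (fun k => ?_) (squeeze_zero (fun k => ?_) (fun k => (hU2 k).le) honek)
    · exact hFbound (U k) (hUpos k)
    · exact mul_nonneg (hUpos k).le (gnonneg _ (hUpos k))
  -- FTC on [T k, U k]
  have ftc : ∀ k : ℕ, ∫ t in (T k)..(U k), H t = F (U k) - F (T k) := by
    intro k
    refine intervalIntegral.integral_eq_sub_of_hasDerivAt (fun x hx => ?_) ?_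
    · rw [uIcc_of_le (hTU k)] at hx
      exact hFderiv x (lt_of_lt_of_le (hT1 k) hx.1)
    · refine (Hint.mono_set ?_).intervalIntegrable
      rw [uIcc_of_le (hTU k)]
      exact fun x hx => lt_of_lt_of_le (hT1 k) hx.1
  -- dominated convergence
  have key : Tendsto (fun k => ∫ t in (T k)..(U k), H t) atTop
      (nhds (∫ t in Set.Ioi (0:ℝ), H t)) := by
    have hmeasH := Hint.aestronglyMeasurable
    have hdct : Tendsto (fun k => ∫ t in Set.Ioi (0:ℝ), (Set.Ioc (T k) (U k)).indicator H t)
        atTop (nhds (∫ t in Set.Ioi (0:ℝ), H t)) := by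
      refine tendsto_integral_of_dominated_convergence (fun t => |H t|)
        (fun k => hmeasH.indicator measurableSet_Ioc) Hint.abs ?_ ?_
      · intro k
        filter_upwards with t
        have h := norm_indicator_le_norm_self (f := H) (s := Set.Ioc (T k) (U k)) t
        simpa [Real.norm_eq_abs] using h
      · rw [ae_restrict_iff' measurableSet_Ioi]
        filter_upwards with t
        intro ht
        have hTt : Tendsto T atTop (nhds 0) :=
          squeeze_zero (fun k => (hT1 k).le) (fun k => (hT2 k).le) honek
        have hUt : Tendsto U atTop atTop :=
          tendsto_atTop_mono (fun k => (hU1 k).le)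
            (tendsto_atTop_add_const_right _ 1 tendsto_natCast_atTop_atTop)
        have h1 : ∀ᶠ k : ℕ in atTop, T k < t := hTt.eventually_lt_const ht
        have h2 : ∀ᶠ k : ℕ in atTop, t ≤ U k := hUt.eventually_ge_atTop t
        refine Tendsto.congr' ?_ tendsto_const_nhds
        filter_upwards [h1, h2] with k hk1 hk2
        have hmem : t ∈ Set.Ioc (T k) (U k) := ⟨hk1, hk2⟩
        exact (Set.indicator_of_mem hmem H).symm
    refine hdct.congr fun k => ?_
    have hsub : Set.Ioc (T k) (U k) ∩ Set.Ioi 0 = Set.Ioc (T k) (U k) :=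
      Set.inter_eq_left.mpr (fun x hx => (hT1 k).trans_le hx.1.le)
    rw [intervalIntegral.integral_of_le (hTU k), integral_indicator measurableSet_Ioc,
      Measure.restrict_restrict measurableSet_Ioc, hsub]
  have hint0 : (∫ t in Set.Ioi (0:ℝ), H t) = 0 := by
    refine tendsto_nhds_unique key ?_
    have : Tendsto (fun k => F (U k) - F (T k)) atTop (nhds 0) := by
      simpa using hFU.sub hFT
    exact (Filter.Tendsto.congr (fun k => (ftc k).symm) this)
  -- conclude
  have hsplit : cB * B - cA * A = 0 := by
    rw [← hint0, hH]
    rw [integral_sub (hI2.const_mul cB) (hI1.const_mul cA),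
      integral_const_mul, integral_const_mul]
  show A = cB * B / cA
  rcases eq_or_ne cA 0 with hcA0 | hcA0
  · have hcBne : cB ≠ 0 := by
      have h : cB = cA - (4*γ+2) := by rw [hcB, hcA]; ring
      rw [h, hcA0]
      intro hh
      linarith
    have hBzero : B = 0 := by
      have h1 : cB * B = 0 := by rw [hcA0] at hsplit; linarith
      exact (mul_eq_zero.mp h1).resolve_left hcBne
    have hnn : 0 ≤ᵐ[volume.restrict (Set.Ioi 0)] f2 := by
      rw [EventuallyLE, ae_restrict_iff' measurableSet_Ioi]
      filter_upwards with t
      intro ht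
      have hp1 : (0:ℝ) ≤ t ^ c1 := Real.rpow_nonneg (le_of_lt ht) c1
      have hp2 : (0:ℝ) ≤ t ^ c2 := Real.rpow_nonneg (le_of_lt ht) c2
      simp only [hf2, Pi.zero_apply]
      positivity
    have hf2ae : f2 =ᵐ[volume.restrict (Set.Ioi 0)] 0 :=
      (integral_eq_zero_iff_of_nonneg_ae hnn hI2).mp hBzero
    have hnull : ∀ᵐ t, t ∈ Set.Ioi (0:ℝ) → deriv ψ t = 0 := by
      rw [← ae_restrict_iff' measurableSet_Ioi]
      filter_upwards [hf2ae, ae_restrict_mem measurableSet_Ioi] with t h1 h2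
      have hp1 : (0:ℝ) < t ^ c1 := Real.rpow_pos_of_pos h2 c1
      have hp2 : (0:ℝ) < t ^ c2 := Real.rpow_pos_of_pos h2 c2
      simp only [hf2, Pi.zero_apply] at h1
      have hsq : (deriv ψ t)^2 = 0 := by
        rcases mul_eq_zero.mp h1 with h | h
        · rcases mul_eq_zero.mp h with h' | h'
          · exact absurd h' hp1.ne'
          · exact h'
        · exact absurd h hp2.ne'
      exact sq_eq_zero_iff.mp hsq
    have hEq : ∀ t ∈ Set.Ioi (0:ℝ), deriv ψ t = 0 := by
      intro t ht
      by_contra hne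
      have hcont : ContinuousOn (deriv ψ) (Set.Ioi 0) := hC1.continuousOn
      have hopen : IsOpen (Set.Ioi (0:ℝ) ∩ deriv ψ ⁻¹' {0}ᶜ) :=
        hcont.isOpen_inter_preimage isOpen_Ioi isOpen_compl_singleton
      have hne' : (Set.Ioi (0:ℝ) ∩ deriv ψ ⁻¹' {0}ᶜ).Nonempty := ⟨t, ht, hne⟩
      have hposm := hopen.measure_pos volume hne'
      have hzero : volume (Set.Ioi (0:ℝ) ∩ deriv ψ ⁻¹' {0}ᶜ) = 0 := by
        rw [ae_iff] at hnull
        refine measure_mono_null (fun x hx => ?_) hnull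
        simp only [Set.mem_setOf_eq]
        push_neg
        exact ⟨hx.1, hx.2⟩
      exact absurd hzero hposm.ne'
    have hψzero : ∀ t ∈ Set.Ioi (0:ℝ), ψ t = 0 := by
      intro t ht
      have heq : deriv ψ =ᶠ[nhds t] (fun _ => (0:ℝ)) := by
        filter_upwards [isOpen_Ioi.mem_nhds ht] with x hx
        exact hEq x hx
      have hdd : deriv (deriv ψ) t = 0 := by
        rw [heq.deriv_eq]
        exact deriv_const t 0
      have hps := hode t ht
      rw [hdd, hEq t ht] at hps
      simp at hps
      linarith
    have hAzero : A = 0 := by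
      have hae : f1 =ᵐ[volume.restrict (Set.Ioi 0)] 0 := by
        rw [EventuallyEq, ae_restrict_iff' measurableSet_Ioi]
        filter_upwards with t
        intro ht
        simp [hf1, hψzero t ht]
      rw [hA]
      exact integral_eq_zero_of_ae hae
    rw [hAzero, hcA0, div_zero]
  · field_simp
    linarith [hsplit]
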